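/- For each n ∈ ℕ let w_n be the diagonal matrix in M_{2^n}(ℂ) whose j-th diagonal entry (0 ≤ j ≤ 2^n − 1) is exp(2πi·j/2^n), and let D_n ∈ M_{2^{n+1}}(ℂ) be the diagonal matrix whose k-th diagonal entry (0 ≤ k ≤ 2^{n+1} − 1) is exp(2πi·(k mod 2^n)/2^n) (the image of w_n under the connecting map a ↦ diag(a, a) up to the standard identification). Then there exists a unitary matrix V ∈ M_{2^{n+1}}(ℂ) such that ‖V · D_n · V* − w_{n+1}‖ ≤ π/2^n, where ‖·‖ is the operator norm on M_{2^{n+1}}(ℂ) induced by the ℓ² norm on ℂ^{2^{n+1}}. (This estimate is what makes the sequence (φ_{n∞}(w_n))_n Cauchy in the unitary distance, so that it converges to a unitary w of M_{2^∞} in the paper's construction of the Robert examples.) -/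

import Mathlib

open Complex Matrix

lemma norm_exp_mul_I_sub_one_le (θ : ℝ) :
    ‖Complex.exp ((θ:ℂ) * Complex.I) - 1‖ ≤ |θ| := by
  have hsq : ‖Complex.exp ((θ:ℂ) * Complex.I) - 1‖ ^ 2 = 2 - 2 * Real.cos θ := by
    rw [Complex.sq_norm, Complex.normSq_apply]
    simp only [Complex.sub_re, Complex.sub_im, Complex.exp_ofReal_mul_I_re,
      Complex.exp_ofReal_mul_I_im, Complex.one_re, Complex.one_im]
    nlinarith [Real.sin_sq_add_cos_sq θ]
  have hc := Real.one_sub_sq_div_two_le_cos (x := θ)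
  have h2 : ‖Complex.exp ((θ:ℂ) * Complex.I) - 1‖ ^ 2 ≤ θ ^ 2 := by rw [hsq]; nlinarith
  calc ‖Complex.exp ((θ:ℂ) * Complex.I) - 1‖
      = Real.sqrt (‖Complex.exp ((θ:ℂ) * Complex.I) - 1‖ ^ 2) := by
        rw [Real.sqrt_sq (norm_nonneg _)]
    _ ≤ Real.sqrt (θ ^ 2) := Real.sqrt_le_sqrt h2
    _ = |θ| := Real.sqrt_sq_eq_abs θ

-- chord length ≤ arc length on the unit circle
lemma chord_le (a b : ℝ) :
    ‖Complex.exp (a * Complex.I) - Complex.exp (b * Complex.I)‖ ≤ |a - b| := by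
  have h1 : Complex.exp ((a:ℂ) * Complex.I) - Complex.exp ((b:ℂ) * Complex.I)
      = Complex.exp ((b:ℂ) * Complex.I) * (Complex.exp (((a - b : ℝ) : ℂ) * Complex.I) - 1) := by
    rw [mul_sub, ← Complex.exp_add, mul_one]
    push_cast
    ring_nf
  rw [h1, norm_mul, Complex.norm_exp_ofReal_mul_I, one_mul]
  exact norm_exp_mul_I_sub_one_le (a - b)

-- operator norm of a diagonal matrix bounded by sup of entries
lemma diag_clm_norm_le {N : ℕ} (v : Fin N → ℂ) {C : ℝ} (hC : 0 ≤ C)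
    (h : ∀ i, ‖v i‖ ≤ C) :
    ‖Matrix.toEuclideanCLM (𝕜 := ℂ) (Matrix.diagonal v)‖ ≤ C := by
  refine ContinuousLinearMap.opNorm_le_bound _ hC fun x => ?_
  have hx : ∀ i, (Matrix.toEuclideanCLM (𝕜 := ℂ) (Matrix.diagonal v) x) i = v i * x i := by
    intro i
    have := congrFun (Matrix.ofLp_toEuclideanCLM (𝕜 := ℂ) (Matrix.diagonal v) x) i
    simpa [Matrix.mulVec_diagonal] using this
  calc ‖Matrix.toEuclideanCLM (𝕜 := ℂ) (Matrix.diagonal v) x‖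
      = Real.sqrt (∑ i, ‖v i * x i‖ ^ 2) := by
        rw [EuclideanSpace.norm_eq]
        congr 1
        exact Finset.sum_congr rfl fun i _ => by rw [hx i]
    _ ≤ Real.sqrt (∑ i, C ^ 2 * ‖x i‖ ^ 2) := by
        apply Real.sqrt_le_sqrt
        refine Finset.sum_le_sum fun i _ => ?_
        rw [norm_mul, mul_pow]
        exact mul_le_mul_of_nonneg_right
          (pow_le_pow_left₀ (norm_nonneg _) (h i) 2) (sq_nonneg _)
    _ = C * Real.sqrt (∑ i, ‖x i‖ ^ 2) := by
        rw [← Finset.mul_sum, Real.sqrt_mul (sq_nonneg C), Real.sqrt_sq hC]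
    _ = C * ‖x‖ := by rw [EuclideanSpace.norm_eq]

lemma fbound (m j : ℕ) (hm : 0 < m) (hj : j < m * 2) : j / 2 + m * (j % 2) < m * 2 := by
  rcases Nat.mod_two_eq_zero_or_one j with h | h <;> rw [h] <;> omega

lemma finj (m : ℕ) (hm : 0 < m) (j j' : ℕ)
    (h : j / 2 + m * (j % 2) = j' / 2 + m * (j' % 2)) (hj : j < m * 2) (hj' : j' < m * 2) :
    j = j' := by
  have h1 : j / 2 < m := by omega
  have h1' : j' / 2 < m := by omega
  have h2 : j / 2 = j' / 2 := by
    have := congrArg (· % m) h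
    simpa [Nat.add_mul_mod_self_left, Nat.mod_eq_of_lt h1, Nat.mod_eq_of_lt h1'] using this
  have h3 : j % 2 = j' % 2 := Nat.eq_of_mul_eq_mul_left hm (by omega)
  omega

lemma entry_est (n c j : ℕ) (hc : c = j / 2) (hjlt : j < 2 ^ (n + 1)) :
    ‖Complex.exp (2 * (Real.pi : ℂ) * Complex.I * (c : ℂ) / ((2 : ℂ) ^ n))
      - Complex.exp (2 * (Real.pi : ℂ) * Complex.I * (j : ℂ) / ((2 : ℂ) ^ (n + 1)))‖
      ≤ Real.pi / 2 ^ n := by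
  have hpi := Real.pi_pos
  have h2R : (0:ℝ) < 2 ^ n := by positivity
  have e1 : 2 * (Real.pi : ℂ) * Complex.I * (c : ℂ) / ((2 : ℂ) ^ n)
      = ((2 * Real.pi * (c : ℝ) / 2 ^ n : ℝ) : ℂ) * Complex.I := by
    push_cast; ring
  have e2 : 2 * (Real.pi : ℂ) * Complex.I * (j : ℂ) / ((2 : ℂ) ^ (n + 1))
      = ((2 * Real.pi * (j : ℝ) / 2 ^ (n + 1) : ℝ) : ℂ) * Complex.I := by
    push_cast; ring
  rw [e1, e2]
  refine (chord_le _ _).trans ?_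
  have hjr : (j : ℝ) = 2 * (c : ℝ) + ((j % 2 : ℕ) : ℝ) := by
    rw [hc]
    exact_mod_cast (Nat.div_add_mod j 2).symm
  have hr0 : (0:ℝ) ≤ ((j % 2 : ℕ) : ℝ) := by positivity
  have hr1 : ((j % 2 : ℕ) : ℝ) ≤ 1 := by
    exact_mod_cast Nat.lt_succ_iff.mp (Nat.mod_lt _ (by norm_num))
  have key : 2 * Real.pi * (c : ℝ) / 2 ^ n - 2 * Real.pi * (j : ℝ) / 2 ^ (n + 1)
      = -(Real.pi * ((j % 2 : ℕ) : ℝ)) / 2 ^ n := by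
    rw [hjr, pow_succ]
    field_simp
    ring
  rw [key, abs_div, abs_neg,
    _root_.abs_of_nonneg (by positivity : (0:ℝ) ≤ Real.pi * ((j % 2 : ℕ) : ℝ)),
    _root_.abs_of_pos h2R]
  have : Real.pi * ((j % 2 : ℕ) : ℝ) ≤ Real.pi := by nlinarith
  exact div_le_div_of_nonneg_right this h2R.le

set_option maxHeartbeats 1000000 in
/-- The image of the diagonal unitary `w_n` under the connecting map
`a ↦ diag (a, a)` is, up to unitary conjugation, at operator-norm distance at most
`π / 2 ^ n` from `w_{n+1}`. -/
theorem stmt_10 (n : ℕ) :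
    ∃ V : Matrix (Fin (2 ^ (n + 1))) (Fin (2 ^ (n + 1))) ℂ,
      V ∈ Matrix.unitaryGroup (Fin (2 ^ (n + 1))) ℂ ∧
      ‖Matrix.toEuclideanCLM (𝕜 := ℂ)
          (V * (Matrix.diagonal fun k : Fin (2 ^ (n + 1)) =>
              Complex.exp (2 * (Real.pi : ℂ) * Complex.I
                * (((k : ℕ) % 2 ^ n : ℕ) : ℂ) / ((2 : ℂ) ^ n))) * star V
          - Matrix.diagonal fun j : Fin (2 ^ (n + 1)) =>
              Complex.exp (2 * (Real.pi : ℂ) * Complex.I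
                * ((j : ℕ) : ℂ) / ((2 : ℂ) ^ (n + 1))))‖
        ≤ Real.pi / 2 ^ n := by
  have hm : 0 < 2 ^ n := pow_pos (by norm_num) n
  have hNm : 2 ^ (n + 1) = 2 ^ n * 2 := pow_succ 2 n
  -- the permutation
  have hb : ∀ j : Fin (2 ^ (n + 1)), (j : ℕ) / 2 + 2 ^ n * ((j : ℕ) % 2) < 2 ^ (n + 1) := by
    intro j
    have hjlt := j.isLt
    have h1 := fbound (2 ^ n) (j : ℕ) hm (by omega)
    omega
  let f : Fin (2 ^ (n + 1)) → Fin (2 ^ (n + 1)) :=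
    fun j => ⟨(j : ℕ) / 2 + 2 ^ n * ((j : ℕ) % 2), hb j⟩
  have hfinj : Function.Injective f := by
    intro j j' h
    have h1 := j.isLt
    have h2 := j'.isLt
    exact Fin.ext (finj (2 ^ n) hm _ _ (congrArg Fin.val h) (by omega) (by omega))
  let σ : Equiv.Perm (Fin (2 ^ (n + 1))) :=
    Equiv.ofBijective f (Finite.injective_iff_bijective.mp hfinj)
  let V : Matrix (Fin (2 ^ (n + 1))) (Fin (2 ^ (n + 1))) ℂ := σ.toPEquiv.toMatrix
  have hstar : star V = σ.symm.toPEquiv.toMatrix := by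
    ext i j
    simp [V, Matrix.star_apply, PEquiv.toMatrix_apply, Equiv.toPEquiv_apply,
      apply_ite (star : ℂ → ℂ), Option.mem_def, Equiv.eq_symm_apply, eq_comm]
  have hVstar : V * star V = 1 := by
    rw [hstar, ← PEquiv.toMatrix_trans, ← Equiv.toPEquiv_trans, Equiv.self_trans_symm,
      Equiv.toPEquiv_refl, PEquiv.toMatrix_refl]
  have hunit : V ∈ Matrix.unitaryGroup (Fin (2 ^ (n + 1))) ℂ :=
    Matrix.mem_unitaryGroup_iff.mpr hVstar
  refine ⟨V, hunit, ?_⟩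
  set v : Fin (2 ^ (n + 1)) → ℂ := fun k =>
    Complex.exp (2 * (Real.pi : ℂ) * Complex.I * (((k : ℕ) % 2 ^ n : ℕ) : ℂ) / ((2 : ℂ) ^ n))
    with hv
  have hconj : V * Matrix.diagonal v * star V = Matrix.diagonal fun j => v (σ j) := by
    rw [hstar, Matrix.mul_assoc, PEquiv.mul_toMatrix_toPEquiv, Equiv.symm_symm,
      PEquiv.toMatrix_toPEquiv_mul]
    ext i j
    by_cases h : i = j
    · subst h; simp
    · simp [Matrix.submatrix_apply, Matrix.diagonal_apply, h, σ.injective.ne h]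
  rw [hconj, Matrix.diagonal_sub]
  apply diag_clm_norm_le _ (by positivity)
  intro j
  simp only [Pi.sub_apply, hv]
  have hσ : ((σ j : ℕ) % 2 ^ n) = (j : ℕ) / 2 := by
    have h0 : (σ j : ℕ) = (j : ℕ) / 2 + 2 ^ n * ((j : ℕ) % 2) := rfl
    rw [h0, Nat.add_mul_mod_self_left, Nat.mod_eq_of_lt (by omega : (j : ℕ) / 2 < 2 ^ n)]
  exact entry_est n _ _ hσ j.isLt
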